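/- For positive integers K, N₁, N₂ and any M ≥ 0, the convolution identity holds: Σ_{m=0}^{M} C_m^{(K,N₁)} · C_{M−m}^{(K,N₂)} = C_M^{(K,N₁+N₂)}, where C_M^{(K,N)} = (N/(KM+N))·C(KM+N, M). -/

import Mathlib

noncomputable def R (K N M : ℕ) : ℚ :=
  match M with
  | 0 => 1
  | M+1 => (Nat.choose (K*(M+1)+N) (M+1) : ℚ) - K * Nat.choose (K*(M+1)+N-1) M

lemma R_val (K N M : ℕ) (hN : 0 < N) :
    R K N M = (N : ℚ) / (K*M+N) * Nat.choose (K*M+N) M := by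
  cases M with
  | zero =>
    have : (N:ℚ) ≠ 0 := by positivity
    simp [R, this]
  | succ M =>
    set a := K*(M+1)+N with ha
    have hapos : 0 < a := by positivity
    have key : (a : ℚ) * Nat.choose (a-1) M = Nat.choose a (M+1) * (M+1) := by
      have h := Nat.add_one_mul_choose_eq (a-1) M
      rw [show a-1+1 = a from by omega] at h
      exact_mod_cast congrArg (Nat.cast : ℕ → ℚ) h
    have haQ : (a:ℚ) ≠ 0 := by positivity
    have hC : (Nat.choose (a-1) M : ℚ) = (M+1)/a * Nat.choose a (M+1) := by
      field_simp
      linarith [key]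
    show (Nat.choose a (M+1) : ℚ) - K * Nat.choose (a-1) M = _
    rw [hC]
    have haN : (a:ℚ) = K*(M+1)+N := by push_cast [ha]; ring
    rw [haN] at haQ ⊢
    field_simp
    push_cast
    ring

lemma R_zero (K M : ℕ) (hK : 0 < K) : R K 0 (M+1) = 0 := by
  have hapos : 0 < K*(M+1) := by positivity
  have key : K*(M+1) * Nat.choose (K*(M+1)-1) M = Nat.choose (K*(M+1)) (M+1) * (M+1) := by
    have h := Nat.add_one_mul_choose_eq (K*(M+1)-1) M
    rwa [show K*(M+1)-1+1 = K*(M+1) from by omega] at h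
  have hch : Nat.choose (K*(M+1)) (M+1) = K * Nat.choose (K*(M+1)-1) M := by
    have h2 : (M+1) * Nat.choose (K*(M+1)) (M+1) = (M+1) * (K * Nat.choose (K*(M+1)-1) M) := by
      rw [Nat.mul_comm, ← key]; ring
    exact Nat.eq_of_mul_eq_mul_left (Nat.succ_pos M) h2
  show (Nat.choose (K*(M+1)+0) (M+1) : ℚ) - K * Nat.choose (K*(M+1)+0-1) M = 0
  rw [Nat.add_zero, hch]
  push_cast
  ring

lemma R_rec (K N M : ℕ) (hK : 0 < K) :
    R K (N+1) (M+1) = R K N (M+1) + R K (N+K) M := by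
  cases M with
  | zero =>
    show (Nat.choose (K*1+(N+1)) 1 : ℚ) - K * Nat.choose (K*1+(N+1)-1) 0
      = ((Nat.choose (K*1+N) 1 : ℚ) - K * Nat.choose (K*1+N-1) 0) + 1
    simp [Nat.choose_one_right]
  | succ M =>
    have hpos : 0 < K*(M+2)+N := by positivity
    obtain ⟨b', hb⟩ : ∃ b', K*(M+2)+N = b'+1 := ⟨K*(M+2)+N-1, by omega⟩
    have hm : K*(M+1)+K = K*(M+2) := by ring
    show (Nat.choose (K*(M+2)+N+1) (M+2) : ℚ) - K * Nat.choose (K*(M+2)+N+1-1) (M+1)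
      = ((Nat.choose (K*(M+2)+N) (M+2) : ℚ) - K * Nat.choose (K*(M+2)+N-1) (M+1))
        + ((Nat.choose (K*(M+1)+(N+K)) (M+1) : ℚ) - K * Nat.choose (K*(M+1)+(N+K)-1) M)
    have e1 : K*(M+2)+N+1-1 = b'+1 := by omega
    have e4 : K*(M+2)+N+1 = b'+2 := by omega
    have e5 : K*(M+2)+N-1 = b' := by omega
    have e6 : K*(M+2)+N = b'+1 := by omega
    have e3 : K*(M+1)+(N+K)-1 = b' := by omega
    have e2 : K*(M+1)+(N+K) = b'+1 := by omega
    rw [e1, e4, e5, e6, e3, e2]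
    have p1 : Nat.choose (b'+2) (M+2) = Nat.choose (b'+1) (M+1) + Nat.choose (b'+1) (M+2) :=
      Nat.choose_succ_succ _ _
    have p2 : Nat.choose (b'+1) (M+1) = Nat.choose b' M + Nat.choose b' (M+1) :=
      Nat.choose_succ_succ _ _
    rw [p1]
    push_cast [p2]
    ring

lemma conv (K : ℕ) (hK : 0 < K) :
    ∀ M N₁ N₂, (∑ m ∈ Finset.range (M+1), R K N₁ m * R K N₂ (M-m)) = R K (N₁+N₂) M := by
  intro M
  induction M with
  | zero => intro N₁ N₂; simp [R]
  | succ M ih =>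
    intro N₁
    induction N₁ with
    | zero =>
      intro N₂
      rw [Finset.sum_range_succ']
      simp only [Nat.zero_add, Nat.sub_zero]
      have hz : ∀ m ∈ Finset.range (M+1), R K 0 (m+1) * R K N₂ (M+1-(m+1)) = 0 := by
        intro m _; rw [R_zero K m hK]; ring
      rw [Finset.sum_congr rfl hz]
      simp [R]
    | succ N₁ ihN =>
      intro N₂
      rw [Finset.sum_range_succ']
      simp only [Nat.sub_zero]
      have step : ∀ m ∈ Finset.range (M+1),
          R K (N₁+1) (m+1) * R K N₂ (M+1-(m+1))
            = R K N₁ (m+1) * R K N₂ (M-m) + R K (N₁+K) m * R K N₂ (M-m) := by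
        intro m _
        have hmm : M+1-(m+1) = M-m := by omega
        rw [hmm, R_rec K N₁ m hK]; ring
      rw [Finset.sum_congr rfl step, Finset.sum_add_distrib]
      have h1 : (∑ m ∈ Finset.range (M+1), R K N₁ (m+1) * R K N₂ (M-m))
          = R K (N₁+N₂) (M+1) - R K N₁ 0 * R K N₂ (M+1) := by
        have h := ihN N₂
        rw [Finset.sum_range_succ'] at h
        have e : ∀ m, M+1-(m+1) = M-m := fun m => by omega
        simp only [e, Nat.zero_add, Nat.sub_zero] at h
        linarith [h]
      have h2 : (∑ m ∈ Finset.range (M+1), R K (N₁+K) m * R K N₂ (M-m)) = R K (N₁+K+N₂) M :=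
        ih (N₁+K) N₂
      rw [add_right_comm, h1, h2]
      have hr : R K (N₁+N₂+1) (M+1) = R K (N₁+N₂) (M+1) + R K (N₁+N₂+K) M := R_rec K (N₁+N₂) M hK
      have e1 : N₁+1+N₂ = N₁+N₂+1 := by ring
      have e2 : N₁+K+N₂ = N₁+N₂+K := by ring
      rw [e1, e2, hr]
      simp [R]

theorem fuss_catalan_convolution (K N₁ N₂ : ℕ) (hK : 0 < K) (hN₁ : 0 < N₁)
    (hN₂ : 0 < N₂) (M : ℕ) :
    (∑ m ∈ Finset.range (M + 1),
        ((N₁ : ℚ) / (K * m + N₁) * (Nat.choose (K * m + N₁) m)) *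
          ((N₂ : ℚ) / (K * (M - m) + N₂) * (Nat.choose (K * (M - m) + N₂) (M - m)))) =
      ((N₁ + N₂ : ℚ)) / (K * M + (N₁ + N₂)) * (Nat.choose (K * M + (N₁ + N₂)) M) := by
  have main := conv K hK M N₁ N₂
  have e : ∀ m ∈ Finset.range (M+1), R K N₁ m * R K N₂ (M-m)
      = ((N₁ : ℚ) / (K * m + N₁) * (Nat.choose (K * m + N₁) m)) *
          ((N₂ : ℚ) / (K * (M - m) + N₂) * (Nat.choose (K * (M - m) + N₂) (M - m))) := by
    intro m hm
    have hm' : m ≤ M := by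
      have := Finset.mem_range.mp hm; omega
    rw [R_val K N₁ m hN₁, R_val K N₂ (M-m) hN₂, Nat.cast_sub hm']
  rw [Finset.sum_congr rfl e] at main
  rw [main, R_val K (N₁+N₂) M (by omega)]
  push_cast
  ring
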